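/- arXiv:quant-ph/0505031 — 3 statements merged into one kernel-verified Lean document; each statement's English description precedes it below -/
import Mathlib

section
/- For a pure state of S ⊗ E with E a tensor product of N subenvironments, define the averaged partial information Ī(m) as the average of I(S : E_F) over all fragments F consisting of m subenvironments. Then Ī(m) + Ī(N−m) = 2 H(ρ_S) for all 0 ≤ m ≤ N; i.e., the partial information plot is antisymmetric about the point (N/2, H(ρ_S)). -/
open scoped ComplexConjugate

/-- Von Neumann entropy of a matrix (via eigenvalues when Hermitian). -/
noncomputable def vnEntropy {n : Type} [Fintype n] [DecidableEq n] (M : Matrix n n ℂ) : ℝ :=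
  if h : M.IsHermitian then -∑ i, h.eigenvalues i * Real.log (h.eigenvalues i) else 0

/-- Density matrix of a pure state. -/
noncomputable def pureDensity {n : Type} [Fintype n] (ψ : n → ℂ) : Matrix n n ℂ :=
  Matrix.of fun i j => ψ i * conj (ψ j)

section Fragments
variable {s : Type} [Fintype s] [DecidableEq s] {N : ℕ} {e : Fin N → Type}
  [∀ i, Fintype (e i)] [∀ i, DecidableEq (e i)]

/-- Glue a configuration on a fragment `F` with a configuration on its complement. -/
def glue (F : Finset (Fin N)) (f : ∀ i : {i // i ∈ F}, e i) (g : ∀ i : {i // i ∉ F}, e i) :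
    ∀ i, e i := fun i => if h : i ∈ F then f ⟨i, h⟩ else g ⟨i, h⟩

/-- Reduced state of the system `S`. -/
noncomputable def redS (ψ : s × (∀ i, e i) → ℂ) : Matrix s s ℂ :=
  Matrix.of fun i j => ∑ g : ∀ i, e i, pureDensity ψ (i, g) (j, g)

/-- Reduced state of the fragment `E_F`. -/
noncomputable def redF (ψ : s × (∀ i, e i) → ℂ) (F : Finset (Fin N)) :
    Matrix (∀ i : {i // i ∈ F}, e i) (∀ i : {i // i ∈ F}, e i) ℂ :=
  Matrix.of fun f f' => ∑ p : s × (∀ i : {i // i ∉ F}, e i),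
    pureDensity ψ (p.1, glue F f p.2) (p.1, glue F f' p.2)

/-- Reduced state of the system together with the fragment `E_F`. -/
noncomputable def redSF (ψ : s × (∀ i, e i) → ℂ) (F : Finset (Fin N)) :
    Matrix (s × ∀ i : {i // i ∈ F}, e i) (s × ∀ i : {i // i ∈ F}, e i) ℂ :=
  Matrix.of fun p q => ∑ g : ∀ i : {i // i ∉ F}, e i,
    pureDensity ψ (p.1, glue F p.2 g) (q.1, glue F q.2 g)

/-- Quantum mutual information `I(S : E_F)` between the system and the fragment `F`. -/
noncomputable def miF (ψ : s × (∀ i, e i) → ℂ) (F : Finset (Fin N)) : ℝ :=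
  vnEntropy (redS ψ) + vnEntropy (redF ψ F) - vnEntropy (redSF ψ F)

end Fragments


section AuxCharpoly
open Polynomial Matrix

private lemma charpoly_AB_BA {m n : Type} [Fintype m] [Fintype n] [DecidableEq m] [DecidableEq n]
    (A : Matrix m n ℂ) (B : Matrix n m ℂ) :
    (A * B).charpoly * X ^ (Fintype.card n) = (B * A).charpoly * X ^ (Fintype.card m) := by
  classical
  set A' : Matrix m n ℂ[X] := A.map (C : ℂ →+* ℂ[X]) with hA'
  set B' : Matrix n m ℂ[X] := B.map (C : ℂ →+* ℂ[X]) with hB'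
  set P : Matrix (m ⊕ n) (m ⊕ n) ℂ[X] :=
    fromBlocks (Matrix.scalar m (X : ℂ[X])) A' B' 1 with hP
  have hAB : charmatrix (A * B) = Matrix.scalar m (X : ℂ[X]) - A' * B' := by
    rw [charmatrix, RingHom.mapMatrix_apply, Matrix.map_mul]
  have hBA : charmatrix (B * A) = Matrix.scalar n (X : ℂ[X]) - B' * A' := by
    rw [charmatrix, RingHom.mapMatrix_apply, Matrix.map_mul]
  have hcomm : (Matrix.diagonal fun _ : m => (X:ℂ[X])) * A' = A' * Matrix.diagonal fun _ : n => (X:ℂ[X]) := by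
    ext i j
    simp [Matrix.diagonal_mul, Matrix.mul_diagonal, mul_comm]
  have id1 : P * fromBlocks 1 0 (-B') 1 = fromBlocks (charmatrix (A * B)) A' 0 1 := by
    rw [hP, fromBlocks_multiply, hAB]
    simp [Matrix.mul_neg, sub_eq_add_neg]
  have id2 : P * fromBlocks 1 (-A') 0 (Matrix.scalar n (X:ℂ[X])) =
      fromBlocks (Matrix.scalar m (X:ℂ[X])) 0 B' (charmatrix (B * A)) := by
    rw [hP, fromBlocks_multiply, hBA]
    simp [Matrix.mul_neg, hcomm, neg_add_eq_sub, Matrix.scalar_apply]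
  have hdetscalar : ∀ {k : Type} [Fintype k] [DecidableEq k],
      (Matrix.scalar k (X:ℂ[X])).det = X ^ (Fintype.card k) := by
    intro k _ _
    simp [Matrix.scalar_apply, Matrix.det_diagonal]
  have d1 := congrArg Matrix.det id1
  have d2 := congrArg Matrix.det id2
  rw [Matrix.det_mul, Matrix.det_fromBlocks_zero₁₂, Matrix.det_fromBlocks_zero₂₁] at d1
  rw [Matrix.det_mul, Matrix.det_fromBlocks_zero₂₁, Matrix.det_fromBlocks_zero₁₂] at d2
  simp only [Matrix.det_one, mul_one, one_mul, hdetscalar] at d1 d2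
  rw [Matrix.charpoly, Matrix.charpoly, ← d1, d2]
  ring

private lemma charpoly_transpose' {n : Type} [Fintype n] [DecidableEq n] (M : Matrix n n ℂ) :
    Mᵀ.charpoly = M.charpoly := by
  have h : charmatrix Mᵀ = (charmatrix M)ᵀ := by
    ext i j
    by_cases h : i = j <;> simp [h, charmatrix_apply, Matrix.diagonal, eq_comm, Ne.symm]
  rw [Matrix.charpoly, Matrix.charpoly, h, Matrix.det_transpose]

private lemma charpoly_diagonal' {n : Type} [Fintype n] [DecidableEq n] (d : n → ℂ) :
    (Matrix.diagonal d).charpoly = ∏ i, (X - C (d i)) := by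
  have h : charmatrix (Matrix.diagonal d) = Matrix.diagonal fun i => X - C (d i) := by
    ext i j
    by_cases h : i = j <;> simp [h, charmatrix_apply, Matrix.diagonal]
  rw [Matrix.charpoly, h, Matrix.det_diagonal]

private lemma herm_charpoly {n : Type} [Fintype n] [DecidableEq n] {M : Matrix n n ℂ}
    (hM : M.IsHermitian) :
    M.charpoly = ∏ i, (X - C (hM.eigenvalues i : ℂ)) := by
  have hs := hM.spectral_theorem
  set U : Matrix n n ℂ := (hM.eigenvectorUnitary : Matrix n n ℂ) with hU
  set D : Matrix n n ℂ := Matrix.diagonal (RCLike.ofReal ∘ hM.eigenvalues) with hD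
  have h1 : M.charpoly * X ^ (Fintype.card n) = D.charpoly * X ^ (Fintype.card n) := by
    calc M.charpoly * X ^ (Fintype.card n)
        = ((U * D) * star U).charpoly * X ^ (Fintype.card n) := by rw [hs]; rfl
      _ = (star U * (U * D)).charpoly * X ^ (Fintype.card n) := charpoly_AB_BA _ _
      _ = D.charpoly * X ^ (Fintype.card n) := by
          rw [← mul_assoc, Unitary.coe_star_mul_self, Matrix.one_mul]
  have h2 : M.charpoly = D.charpoly :=
    mul_right_cancel₀ (pow_ne_zero _ X_ne_zero) h1
  rw [h2, hD, charpoly_diagonal']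
  rfl

private lemma herm_roots {n : Type} [Fintype n] [DecidableEq n] {M : Matrix n n ℂ}
    (hM : M.IsHermitian) :
    M.charpoly.roots = Finset.univ.val.map fun i => (hM.eigenvalues i : ℂ) := by
  rw [herm_charpoly hM, Finset.prod_eq_multiset_prod,
    show (fun i => X - C (hM.eigenvalues i : ℂ)) = (fun a => X - C a) ∘
      (fun i => (hM.eigenvalues i : ℂ)) from rfl,
    ← Multiset.map_map, roots_multiset_prod_X_sub_C]

private lemma vnEntropy_eq_of_charpoly {m n : Type} [Fintype m] [DecidableEq m] [Fintype n]
    [DecidableEq n] {M : Matrix m m ℂ} {N : Matrix n n ℂ}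
    (hM : M.IsHermitian) (hN : N.IsHermitian)
    {a b : ℕ} (h : M.charpoly * X ^ a = N.charpoly * X ^ b) :
    vnEntropy M = vnEntropy N := by
  have hroots := congrArg Polynomial.roots h
  rw [Polynomial.roots_mul (mul_ne_zero M.charpoly_monic.ne_zero (pow_ne_zero _ X_ne_zero)),
      Polynomial.roots_mul (mul_ne_zero N.charpoly_monic.ne_zero (pow_ne_zero _ X_ne_zero)),
      roots_pow, roots_pow, roots_X, Multiset.nsmul_singleton,
      herm_roots hM, herm_roots hN] at hroots
  set g : ℂ → ℝ := fun z => z.re * Real.log z.re with hg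
  have hsum := congrArg (fun s : Multiset ℂ => (s.map g).sum) hroots
  simp only [Multiset.map_add, Multiset.sum_add, Multiset.map_replicate, Multiset.map_map,
    Multiset.nsmul_singleton, hg, Complex.zero_re, Real.log_zero, mul_zero,
    Multiset.sum_replicate, smul_zero, add_zero, Function.comp_def, Complex.ofReal_re] at hsum
  rw [vnEntropy, dif_pos hM, vnEntropy, dif_pos hN]
  congr 1

end AuxCharpoly

section AuxFragments
open Polynomial Matrix
variable {s : Type} [Fintype s] [DecidableEq s] {N : ℕ} {e : Fin N → Type}
  [∀ i, Fintype (e i)] [∀ i, DecidableEq (e i)]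

/-- matrix whose rows are indexed by `S ⊗ E_F` and columns by `E_{Fᶜ}` -/
private noncomputable def matSF (ψ : s × (∀ i, e i) → ℂ) (F : Finset (Fin N)) :
    Matrix (s × ∀ i : {i // i ∈ F}, e i) (∀ i : {i // i ∉ F}, e i) ℂ :=
  Matrix.of fun p g => ψ (p.1, glue F p.2 g)

private noncomputable def matF (ψ : s × (∀ i, e i) → ℂ) (F : Finset (Fin N)) :
    Matrix (∀ i : {i // i ∈ F}, e i) (s × ∀ i : {i // i ∉ F}, e i) ℂ :=
  Matrix.of fun f p => ψ (p.1, glue F f p.2)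

private lemma redSF_eq (ψ : s × (∀ i, e i) → ℂ) (F : Finset (Fin N)) :
    redSF ψ F = matSF ψ F * (matSF ψ F)ᴴ := by
  ext p q
  simp only [redSF, matSF, pureDensity, Matrix.of_apply, Matrix.mul_apply,
    Matrix.conjTranspose_apply, starRingEnd_apply]

private lemma redF_eq (ψ : s × (∀ i, e i) → ℂ) (F : Finset (Fin N)) :
    redF ψ F = matF ψ F * (matF ψ F)ᴴ := by
  ext f f'
  simp only [redF, matF, pureDensity, Matrix.of_apply, Matrix.mul_apply,
    Matrix.conjTranspose_apply, starRingEnd_apply]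

/-- equiv between configurations on `Fᶜ` (as a fragment) and on the complement of `F` -/
private def eC (F : Finset (Fin N)) : (∀ i : {i // i ∈ Fᶜ}, e i) ≃ (∀ i : {i // i ∉ F}, e i) where
  toFun f i := f ⟨i.1, Finset.mem_compl.2 i.2⟩
  invFun f i := f ⟨i.1, Finset.mem_compl.1 i.2⟩
  left_inv _ := rfl
  right_inv _ := rfl

private def eM (F : Finset (Fin N)) : (∀ i : {i // i ∉ Fᶜ}, e i) ≃ (∀ i : {i // i ∈ F}, e i) where
  toFun f i := f ⟨i.1, by simp [i.2]⟩
  invFun f i := f ⟨i.1, by simpa using i.2⟩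
  left_inv _ := rfl
  right_inv _ := rfl

private lemma glue_compl (F : Finset (Fin N)) (f : ∀ i : {i // i ∈ Fᶜ}, e i)
    (g : ∀ i : {i // i ∉ Fᶜ}, e i) :
    glue Fᶜ f g = glue F (eM F g) (eC F f) := by
  funext i
  by_cases h : i ∈ F <;> simp [glue, h, eM, eC, Finset.mem_compl]

private lemma redF_compl_eq (ψ : s × (∀ i, e i) → ℂ) (F : Finset (Fin N)) :
    redF ψ Fᶜ = ((matSF ψ F)ᵀ * ((matSF ψ F)ᵀ)ᴴ).submatrix (eC F) (eC F) := by
  ext f f'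
  simp only [redF, Matrix.of_apply, pureDensity, Matrix.submatrix_apply, Matrix.mul_apply,
    Matrix.conjTranspose_apply, Matrix.transpose_apply, matSF, starRingEnd_apply,
    glue_compl]
  exact Fintype.sum_equiv ((Equiv.refl s).prodCongr (eM F)) _ _ (fun p => rfl)

private lemma charpoly_redSF_redF_compl (ψ : s × (∀ i, e i) → ℂ) (F : Finset (Fin N)) :
    (redF ψ Fᶜ).charpoly * X ^ (Fintype.card (s × ∀ i : {i // i ∈ F}, e i)) =
    (redSF ψ F).charpoly * X ^ (Fintype.card (∀ i : {i // i ∉ F}, e i)) := by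
  have h1 : (redF ψ Fᶜ).charpoly = ((matSF ψ F)ᵀ * ((matSF ψ F)ᵀ)ᴴ).charpoly := by
    rw [redF_compl_eq, show ((matSF ψ F)ᵀ * ((matSF ψ F)ᵀ)ᴴ).submatrix (eC F) (eC F)
      = Matrix.reindex (eC F).symm (eC F).symm ((matSF ψ F)ᵀ * ((matSF ψ F)ᵀ)ᴴ) from rfl,
      Matrix.charpoly_reindex]
  have h2 : (redSF ψ F).charpoly = (((matSF ψ F)ᵀ)ᴴ * (matSF ψ F)ᵀ).charpoly := by
    rw [redSF_eq, ← charpoly_transpose']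
    congr 1
    rw [Matrix.transpose_mul]
    rfl
  rw [h1, h2]
  exact charpoly_AB_BA _ _

private lemma vnEntropy_redSF (ψ : s × (∀ i, e i) → ℂ) (F : Finset (Fin N)) :
    vnEntropy (redSF ψ F) = vnEntropy (redF ψ Fᶜ) := by
  refine vnEntropy_eq_of_charpoly ?_ ?_ (charpoly_redSF_redF_compl ψ F).symm
  · rw [redSF_eq]; exact Matrix.isHermitian_mul_conjTranspose_self _
  · rw [redF_eq]; exact Matrix.isHermitian_mul_conjTranspose_self _

private lemma miF_add_compl (ψ : s × (∀ i, e i) → ℂ) (F : Finset (Fin N)) :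
    miF ψ F + miF ψ Fᶜ = 2 * vnEntropy (redS ψ) := by
  have h1 := vnEntropy_redSF ψ F
  have h2 := vnEntropy_redSF ψ Fᶜ
  rw [compl_compl] at h2
  simp only [miF]
  linarith

end AuxFragments


/-- Averaged partial information: the average of `I(S : E_F)` over all fragments of size `m`. -/
noncomputable def avgPI {s : Type} [Fintype s] [DecidableEq s] {N : ℕ} {e : Fin N → Type}
    [∀ i, Fintype (e i)] [∀ i, DecidableEq (e i)]
    (ψ : s × (∀ i, e i) → ℂ) (m : ℕ) : ℝ :=
  (N.choose m : ℝ)⁻¹ * ∑ F ∈ Finset.powersetCard m (Finset.univ : Finset (Fin N)), miF ψ F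

/-- Antisymmetry of the partial information plot: `Ī(m) + Ī(N−m) = 2 H(ρ_S)`. -/
theorem avgPI_antisymm
    {s : Type} [Fintype s] [DecidableEq s] {N : ℕ} {e : Fin N → Type}
    [∀ i, Fintype (e i)] [∀ i, DecidableEq (e i)]
    (ψ : s × (∀ i, e i) → ℂ) (hψ : ∑ i, Complex.normSq (ψ i) = 1)
    (m : ℕ) (hm : m ≤ N) :
    avgPI ψ m + avgPI ψ (N - m) = 2 * vnEntropy (redS ψ) := by
  classical
  have hcard : (Finset.powersetCard m (Finset.univ : Finset (Fin N))).card = N.choose m := by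
    simp [Finset.card_powersetCard]
  have hchoose : (0:ℝ) < (N.choose m : ℝ) := by exact_mod_cast Nat.choose_pos hm
  have hsum : ∑ F ∈ Finset.powersetCard (N - m) (Finset.univ : Finset (Fin N)), miF ψ F
      = ∑ F ∈ Finset.powersetCard m (Finset.univ : Finset (Fin N)), miF ψ Fᶜ := by
    refine Finset.sum_nbij' (fun F => Fᶜ) (fun F => Fᶜ) ?_ ?_ ?_ ?_ ?_
    · intro F hF
      rw [Finset.mem_powersetCard_univ] at hF ⊢
      rw [Finset.card_compl, hF, Fintype.card_fin, Nat.sub_sub_self hm]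
    · intro F hF
      rw [Finset.mem_powersetCard_univ] at hF ⊢
      rw [Finset.card_compl, hF, Fintype.card_fin]
    · intro F _; exact compl_compl F
    · intro F _; exact compl_compl F
    · intro F _; rw [compl_compl]
  have hconst : ∀ F ∈ Finset.powersetCard m (Finset.univ : Finset (Fin N)),
      miF ψ F + miF ψ Fᶜ = 2 * vnEntropy (redS ψ) := fun F _ => miF_add_compl ψ F
  rw [avgPI, avgPI, Nat.choose_symm hm, hsum, ← mul_add, ← Finset.sum_add_distrib,
    Finset.sum_congr rfl hconst, Finset.sum_const, hcard, nsmul_eq_mul, ← mul_assoc,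
    inv_mul_cancel₀ hchoose.ne', one_mul]
end

section
/- For integer D ≥ 2, the variance of d under the density p(d) = 2(D−1)e^{−2d}(1−e^{−2d})^{D−2} equals π²/24 − Ψ₁(D)/4, where Ψ₁ is the trigamma function. -/
open Real MeasureTheory Set Finset

private lemma integral_pow_exp' (n : ℕ) {c : ℝ} (hc : 0 < c) :
    ∫ x in Set.Ioi (0:ℝ), x ^ n * Real.exp (-c * x) = (Nat.factorial n : ℝ) / c ^ (n + 1) := by
  have h := Real.integral_rpow_mul_exp_neg_mul_Ioi (a := (n:ℝ)+1) (r := c)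
    (by positivity) hc
  simp_rw [show ((n:ℝ)+1-1) = ((n:ℕ):ℝ) by ring, Real.rpow_natCast, ← neg_mul] at h
  rw [h, show ((n:ℝ)+1) = ((n+1:ℕ):ℝ) by push_cast; ring, Real.rpow_natCast,
    show ((n+1:ℕ):ℝ) = (n:ℝ)+1 by push_cast; ring,
    Real.Gamma_nat_eq_factorial, div_pow, one_pow]
  field_simp

private lemma integrable_pow_exp' (n : ℕ) {c : ℝ} (hc : 0 < c) :
    IntegrableOn (fun x : ℝ => x ^ n * Real.exp (-c * x)) (Set.Ioi 0) := by
  have h := integrableOn_rpow_mul_exp_neg_mul_rpow (s := (n : ℝ)) (p := 1) (b := c)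
    (lt_of_lt_of_le neg_one_lt_zero (Nat.cast_nonneg n)) zero_lt_one hc
  simpa [Real.rpow_natCast, Real.rpow_one] using h

private noncomputable def Hs (r M : ℕ) : ℝ := ∑ i ∈ Finset.range M, 1 / ((i:ℝ)+1) ^ r

private noncomputable def A (r M : ℕ) : ℝ :=
  ∑ j ∈ Finset.range M, (-1:ℝ)^j * (M.choose (j+1)) / ((j:ℝ)+1) ^ r

private lemma key (r m : ℕ) :
    ((m:ℝ)+1) * ∑ j ∈ Finset.range (m+1), (-1:ℝ)^j * (m.choose j) / ((j:ℝ)+1) ^ (r+1)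
      = A r (m+1) := by
  rw [A, Finset.mul_sum]
  refine Finset.sum_congr rfl fun j hj => ?_
  have hc : ((m:ℝ)+1) * (m.choose j : ℝ) = ((m+1).choose (j+1) : ℝ) * ((j:ℝ)+1) := by
    have h := Nat.add_one_mul_choose_eq m j
    exact_mod_cast congrArg (Nat.cast : ℕ → ℝ) h
  have hj1 : ((j:ℝ)+1) ≠ 0 := by positivity
  rw [pow_succ]
  field_simp
  linear_combination hc

private lemma A_zero (M : ℕ) : A 0 (M+1) = 1 := by
  have h := Int.alternating_sum_range_choose_of_ne (n := M+1) (Nat.succ_ne_zero M)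
  have h2 : (∑ i ∈ Finset.range (M+2), (-1:ℝ)^i * ((M+1).choose i : ℝ)) = 0 := by
    exact_mod_cast congrArg (Int.cast : ℤ → ℝ) h
  rw [Finset.sum_range_succ'] at h2
  simp only [Nat.choose_zero_right, pow_zero, Nat.cast_one, mul_one] at h2
  rw [A]
  simp only [pow_zero, div_one]
  have : ∑ j ∈ Finset.range (M+1), (-1:ℝ)^j * ((M+1).choose (j+1) : ℝ)
      = - ∑ i ∈ Finset.range (M+1), (-1:ℝ)^(i+1) * ((M+1).choose (i+1) : ℝ) := by
    rw [← Finset.sum_neg_distrib]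
    refine Finset.sum_congr rfl fun j _ => ?_
    rw [pow_succ]; ring
  rw [this]
  linarith

private lemma A_step (r M : ℕ) :
    A r (M+1) = A r M + ∑ j ∈ Finset.range (M+1), (-1:ℝ)^j * (M.choose j) / ((j:ℝ)+1) ^ r := by
  have hA : A r M = ∑ j ∈ Finset.range (M+1), (-1:ℝ)^j * (M.choose (j+1)) / ((j:ℝ)+1) ^ r := by
    rw [A, Finset.sum_range_succ, Nat.choose_succ_self]
    simp
  rw [A, hA, ← Finset.sum_add_distrib]
  refine Finset.sum_congr rfl fun j _ => ?_
  rw [Nat.choose_succ_succ M j]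
  push_cast
  ring

private lemma Hs_step (r M : ℕ) : Hs r (M+1) = Hs r M + 1/((M:ℝ)+1)^r := by
  simp [Hs, Finset.sum_range_succ]

private lemma A_one (M : ℕ) : A 1 M = Hs 1 M := by
  induction M with
  | zero => simp [A, Hs]
  | succ M ih =>
    have hk := key 0 M
    rw [A_zero] at hk
    norm_num at hk
    have hM1 : ((M:ℝ)+1) ≠ 0 := by positivity
    have hsum : ∑ j ∈ Finset.range (M+1), (-1:ℝ)^j * (M.choose j) / ((j:ℝ)+1) ^ 1
        = 1/((M:ℝ)+1) := by
      rw [eq_div_iff hM1, mul_comm]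
      simpa using hk
    rw [A_step, hsum, ih, Hs_step]
    norm_num

private lemma A_two (M : ℕ) : A 2 M = ((Hs 1 M)^2 + Hs 2 M) / 2 := by
  induction M with
  | zero => simp [A, Hs]
  | succ M ih =>
    have hk := key 1 M
    rw [A_one] at hk
    have hM1 : ((M:ℝ)+1) ≠ 0 := by positivity
    have hsum : ∑ j ∈ Finset.range (M+1), (-1:ℝ)^j * (M.choose j) / ((j:ℝ)+1) ^ 2
        = Hs 1 (M+1) / ((M:ℝ)+1) := by
      rw [eq_div_iff hM1, mul_comm]
      simpa using hk
    rw [A_step, hsum, ih, Hs_step, Hs_step]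
    field_simp
    ring

private lemma expand (s m : ℕ) (d : ℝ) :
    d ^ s * (2 * ((m:ℝ)+1) * Real.exp (-2*d) * (1 - Real.exp (-2*d)) ^ m)
    = ∑ j ∈ Finset.range (m+1),
        ((-1:ℝ)^j * (m.choose j) * (2*((m:ℝ)+1))) *
          (d ^ s * Real.exp (-(2*((j:ℝ)+1)) * d)) := by
  rw [sub_eq_neg_add, add_pow, Finset.mul_sum, Finset.mul_sum]
  refine Finset.sum_congr rfl fun j hj => ?_
  have he : Real.exp (-(2*((j:ℝ)+1)) * d) = Real.exp (-2*d) * Real.exp (-2*d) ^ j := by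
    rw [show (-(2*((j:ℝ)+1)) * d) = ((j:ℕ):ℝ) * (-2*d) + (-2*d) by ring,
      Real.exp_add, Real.exp_nat_mul]
    ring
  rw [he, neg_pow]
  ring

private lemma main_integral (s m : ℕ) :
    ∫ d in Set.Ici (0:ℝ), d ^ s * (2 * ((m:ℝ)+1) * Real.exp (-2*d) * (1 - Real.exp (-2*d)) ^ m)
      = (Nat.factorial s : ℝ) / 2 ^ s * A s (m+1) := by
  rw [MeasureTheory.integral_Ici_eq_integral_Ioi]
  have hj : ∀ j : ℕ, (0:ℝ) < 2*((j:ℝ)+1) := fun j => by positivity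
  calc ∫ d in Set.Ioi (0:ℝ),
        d ^ s * (2 * ((m:ℝ)+1) * Real.exp (-2*d) * (1 - Real.exp (-2*d)) ^ m)
      = ∫ d in Set.Ioi (0:ℝ), ∑ j ∈ Finset.range (m+1),
          ((-1:ℝ)^j * (m.choose j) * (2*((m:ℝ)+1))) *
            (d ^ s * Real.exp (-(2*((j:ℝ)+1)) * d)) := by
        refine integral_congr_ae (Filter.Eventually.of_forall fun d => expand s m d)
    _ = ∑ j ∈ Finset.range (m+1), ∫ d in Set.Ioi (0:ℝ),
          ((-1:ℝ)^j * (m.choose j) * (2*((m:ℝ)+1))) *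
            (d ^ s * Real.exp (-(2*((j:ℝ)+1)) * d)) := by
        refine MeasureTheory.integral_finset_sum _ fun j _ => ?_
        exact (integrable_pow_exp' s (hj j)).const_mul _
    _ = ∑ j ∈ Finset.range (m+1),
          ((-1:ℝ)^j * (m.choose j) * (2*((m:ℝ)+1))) *
            ((Nat.factorial s : ℝ) / (2*((j:ℝ)+1)) ^ (s+1)) := by
        refine Finset.sum_congr rfl fun j _ => ?_
        rw [MeasureTheory.integral_const_mul, integral_pow_exp' s (hj j)]
    _ = (Nat.factorial s : ℝ) / 2 ^ s * A s (m+1) := by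
        rw [← key s m, Finset.mul_sum, Finset.mul_sum]
        refine Finset.sum_congr rfl fun j _ => ?_
        have h1 : ((j:ℝ)+1) ≠ 0 := by positivity
        rw [mul_pow]
        field_simp
        ring

private lemma tsum_shift (m : ℕ) :
    (∑' k : ℕ, (1 : ℝ) / ((k : ℝ) + ((m+2:ℕ) : ℝ)) ^ 2)
      = Real.pi ^ 2 / 6 - Hs 2 (m+1) := by
  have h0 : HasSum (fun n : ℕ => (1:ℝ)/(n:ℝ)^2) (Real.pi^2/6) := hasSum_zeta_two
  have h1 : HasSum (fun n : ℕ => (1:ℝ)/((n + (m+2) : ℕ):ℝ)^2)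
      (Real.pi^2/6 - ∑ i ∈ Finset.range (m+2), (1:ℝ)/(i:ℝ)^2) :=
    (hasSum_nat_add_iff' (m+2)).mpr h0
  have h2 : ∑ i ∈ Finset.range (m+2), (1:ℝ)/(i:ℝ)^2 = Hs 2 (m+1) := by
    rw [Finset.sum_range_succ', Hs]
    push_cast
    simp
  rw [h2] at h1
  rw [← h1.tsum_eq]
  refine tsum_congr fun k => ?_
  push_cast
  ring_nf

/-- The variance of `d` under the density `p(d) = 2(D−1)e^{−2d}(1−e^{−2d})^{D−2}` equals
`π²/24 − Ψ₁(D)/4`, where `Ψ₁(D) = Σ_{k=D}^∞ 1/k²` is the trigamma function. -/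
theorem variance_decoherence_factor (D : ℕ) (hD : 2 ≤ D) :
    (∫ d in Set.Ici (0 : ℝ),
        d ^ 2 * (2 * ((D : ℝ) - 1) * Real.exp (-2 * d) * (1 - Real.exp (-2 * d)) ^ (D - 2)))
      - (∫ d in Set.Ici (0 : ℝ),
          d * (2 * ((D : ℝ) - 1) * Real.exp (-2 * d) * (1 - Real.exp (-2 * d)) ^ (D - 2))) ^ 2
      = Real.pi ^ 2 / 24 - (∑' k : ℕ, (1 : ℝ) / ((k : ℝ) + (D : ℝ)) ^ 2) / 4 := by
  obtain ⟨m, rfl⟩ : ∃ m, D = m + 2 := ⟨D - 2, by omega⟩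
  have hcast : ((m+2:ℕ) : ℝ) - 1 = (m:ℝ) + 1 := by push_cast; ring
  have hsub : m + 2 - 2 = m := by omega
  have h2 := main_integral 2 m
  have h1 := main_integral 1 m
  simp only [pow_one] at h1
  rw [hcast, hsub]
  rw [show (∫ d in Set.Ici (0 : ℝ),
      d ^ 2 * (2 * ((m:ℝ)+1) * Real.exp (-2 * d) * (1 - Real.exp (-2 * d)) ^ m))
      = (Nat.factorial 2 : ℝ) / 2 ^ 2 * A 2 (m+1) from h2,
    show (∫ d in Set.Ici (0 : ℝ),
      d * (2 * ((m:ℝ)+1) * Real.exp (-2 * d) * (1 - Real.exp (-2 * d)) ^ m))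
      = (Nat.factorial 1 : ℝ) / 2 * A 1 (m+1) from h1,
    tsum_shift m, A_two, A_one]
  norm_num [Nat.factorial]
  ring
end

section
/- Page's average entropy satisfies the bound H̄(m,n) = Σ_{k=n+1}^{mn} 1/k − (m−1)/(2n) ≤ log m for all integers 1 ≤ m ≤ n, with equality iff m = 1. -/
lemma page_term_le (a : ℕ) (ha : 0 < a) :
    (1:ℝ)/((a:ℝ)+1) ≤ Real.log ((a:ℝ)+1) - Real.log a := by
  have ha' : (0:ℝ) < a := by exact_mod_cast ha
  have key : Real.log ((a:ℝ)/((a:ℝ)+1)) ≤ (a:ℝ)/((a:ℝ)+1) - 1 :=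
    Real.log_le_sub_one_of_pos (by positivity)
  have hlog : Real.log ((a:ℝ)/((a:ℝ)+1)) = Real.log a - Real.log ((a:ℝ)+1) :=
    Real.log_div (ne_of_gt ha') (by positivity)
  have heq : (a:ℝ)/((a:ℝ)+1) - 1 = -(1/((a:ℝ)+1)) := by field_simp; ring
  linarith [key, hlog.symm, heq]

lemma page_sum_le (m n : ℕ) (h1 : 1 ≤ m) (hn : 1 ≤ n) :
    (∑ k ∈ Finset.Icc (n + 1) (m * n), (1 : ℝ) / (k : ℝ)) ≤ Real.log m := by
  have hmn : n ≤ m * n := Nat.le_mul_of_pos_left n h1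
  have hsum : (∑ k ∈ Finset.Icc (n + 1) (m * n), (1 : ℝ) / (k : ℝ))
      = ∑ i ∈ Finset.range (m * n - n), (1:ℝ) / ((n + 1 + i : ℕ) : ℝ) := by
    rw [← Finset.Ico_add_one_right_eq_Icc, Finset.sum_Ico_eq_sum_range]
    have : m * n + 1 - (n + 1) = m * n - n := by omega
    rw [this]
  rw [hsum]
  have hle : ∑ i ∈ Finset.range (m * n - n), (1:ℝ) / ((n + 1 + i : ℕ) : ℝ)
      ≤ ∑ i ∈ Finset.range (m * n - n),
          (Real.log (((n + (i+1) : ℕ)):ℝ) - Real.log ((n + i : ℕ) : ℝ)) := by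
    apply Finset.sum_le_sum
    intro i _
    have := page_term_le (n + i) (by omega)
    have hc1 : ((n + 1 + i : ℕ) : ℝ) = ((n + i : ℕ):ℝ) + 1 := by push_cast; ring
    have hc2 : ((n + (i+1) : ℕ) : ℝ) = ((n + i : ℕ):ℝ) + 1 := by push_cast; ring
    rw [hc1, hc2]
    exact this
  refine hle.trans ?_
  rw [Finset.sum_range_sub (fun i => Real.log ((n + i : ℕ) : ℝ))]
  have h1' : n + (m * n - n) = m * n := by omega
  rw [h1']
  have : ((m * n : ℕ) : ℝ) = (m:ℝ) * n := by push_cast; ring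
  rw [this, Real.log_mul (by positivity) (by positivity : (0:ℝ) < (n:ℝ)).ne']
  simp

/-- Page's average entropy satisfies `H̄(m,n) = Σ_{k=n+1}^{mn} 1/k − (m−1)/(2n) ≤ log m`,
with equality iff `m = 1`. -/
theorem page_entropy_le_log (m n : ℕ) (h1 : 1 ≤ m) (h2 : m ≤ n) :
    ((∑ k ∈ Finset.Icc (n + 1) (m * n), (1 : ℝ) / (k : ℝ)) - ((m : ℝ) - 1) / (2 * (n : ℝ))
        ≤ Real.log m) ∧
    (((∑ k ∈ Finset.Icc (n + 1) (m * n), (1 : ℝ) / (k : ℝ)) - ((m : ℝ) - 1) / (2 * (n : ℝ))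
        = Real.log m) ↔ m = 1) := by
  have hn : 1 ≤ n := le_trans h1 h2
  have hn' : (0:ℝ) < n := by exact_mod_cast hn
  have hsum := page_sum_le m n h1 hn
  have hm1 : (1:ℝ) ≤ m := by exact_mod_cast h1
  have hc : (0:ℝ) ≤ ((m:ℝ) - 1) / (2 * n) := by
    apply div_nonneg (by linarith) (by linarith)
  constructor
  · linarith
  · constructor
    · intro heq
      by_contra hne
      have hm2 : 2 ≤ m := by omega
      have hm2' : (2:ℝ) ≤ m := by exact_mod_cast hm2
      have hpos : (0:ℝ) < ((m:ℝ) - 1) / (2 * n) := by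
        apply div_pos (by linarith) (by linarith)
      linarith
    · intro hm
      subst hm
      simp
end
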